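/- The ℂ-vector space of functions f : 𝕄 → ℂ such that (i) f(gM) = f(M) for all g ∈ GL₂(R) and M ∈ 𝕄, and (ii) f(M·diag(a,d)) = χ(ā)·χ(d̄)·f(M) for all a, d ∈ Rˣ and M ∈ 𝕄, is one-dimensional, and the function f̃ is a basis of this space. -/

import Mathlib

open IsLocalRing

noncomputable section

variable (R : Type*) [CommRing R] [IsDomain R] [IsDiscreteValuationRing R]

/-- The condition defining the set `𝕄` of `2×2` matrices over `R` whose determinant has
valuation exactly `1`. -/
def inMM (M : Matrix (Fin 2) (Fin 2) R) : Prop :=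
  M.det ∈ maximalIdeal R ∧ M.det ∉ (maximalIdeal R) ^ 2

/-- The set `𝕄`, as a type. -/
abbrev MM := {M : Matrix (Fin 2) (Fin 2) R // inMM R M}

variable [Fintype (ResidueField R)] [DecidableEq (ResidueField R)]

/-- The function `f̃ : 𝕄 → ℂ`: `f̃(M) = χ(M̄₁₁·M̄₁₂)` if `M₁₁, M₁₂` are units,
`f̃(M) = χ(M̄₂₁·M̄₂₂)` if `M₂₁, M₂₂` are units, and `f̃(M) = 0` otherwise. -/
def ftilde (M : MM R) : ℂ := by
  classical
  exact
    if IsUnit (M.1 0 0) ∧ IsUnit (M.1 0 1) then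
      ((quadraticChar (ResidueField R) (residue R (M.1 0 0) * residue R (M.1 0 1)) : ℤ) : ℂ)
    else if IsUnit (M.1 1 0) ∧ IsUnit (M.1 1 1) then
      ((quadraticChar (ResidueField R) (residue R (M.1 1 0) * residue R (M.1 1 1)) : ℤ) : ℂ)
    else 0

/-- The two conditions on a function `f : 𝕄 → ℂ`:
(i) `f(gM) = f(M)` for all `g ∈ GL₂(R)` and `M ∈ 𝕄`;
(ii) `f(M·diag(a,d)) = χ(ā)·χ(d̄)·f(M)` for all units `a, d` of `R` and `M ∈ 𝕄`. -/
def GoodFun (f : MM R → ℂ) : Prop :=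
  (∀ (g : (Matrix (Fin 2) (Fin 2) R)ˣ) (M : MM R)
      (h : inMM R ((g : Matrix (Fin 2) (Fin 2) R) * M.1)),
      f ⟨(g : Matrix (Fin 2) (Fin 2) R) * M.1, h⟩ = f M) ∧
  (∀ (a d : Rˣ) (M : MM R)
      (h : inMM R (M.1 * Matrix.diagonal ![(a : R), (d : R)])),
      f ⟨M.1 * Matrix.diagonal ![(a : R), (d : R)], h⟩ =
        ((quadraticChar (ResidueField R) (residue R (a : R)) : ℤ) : ℂ) *
          ((quadraticChar (ResidueField R) (residue R (d : R)) : ℤ) : ℂ) * f M)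

end

noncomputable section helpersAux

open Matrix

variable {R : Type*} [CommRing R] [IsDomain R] [IsDiscreteValuationRing R]

lemma res_ne_zero_iff (x : R) : residue R x ≠ 0 ↔ IsUnit x := by
  rw [Ne, IsLocalRing.residue_eq_zero_iff]
  simp [IsLocalRing.mem_maximalIdeal, mem_nonunits_iff, not_not]

lemma res_eq_zero_iff (x : R) : residue R x = 0 ↔ ¬ IsUnit x := by
  rw [← res_ne_zero_iff, not_not]

def rbar (M : Matrix (Fin 2) (Fin 2) R) : Matrix (Fin 2) (Fin 2) (ResidueField R) :=
  M.map (residue R)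

lemma rbar_mul (M N : Matrix (Fin 2) (Fin 2) R) : rbar (M * N) = rbar M * rbar N :=
  Matrix.map_mul

lemma rbar_det (M : Matrix (Fin 2) (Fin 2) R) : (rbar M).det = residue R M.det :=
  (RingHom.map_det (residue R) M).symm

lemma det_rbar_eq_zero {M : Matrix (Fin 2) (Fin 2) R} (h : inMM R M) : (rbar M).det = 0 := by
  rw [rbar_det, IsLocalRing.residue_eq_zero_iff]; exact h.1

lemma rbar_ne_zero {M : Matrix (Fin 2) (Fin 2) R} (h : inMM R M) : rbar M ≠ 0 := by
  intro h0
  apply h.2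
  have hm : ∀ i j, M i j ∈ maximalIdeal R := by
    intro i j
    rw [← IsLocalRing.residue_eq_zero_iff]
    have := congrFun (congrFun h0 i) j
    simpa [rbar, Matrix.map_apply] using this
  rw [Matrix.det_fin_two, pow_two]
  exact Ideal.sub_mem _ (Ideal.mul_mem_mul (hm 0 0) (hm 1 1)) (Ideal.mul_mem_mul (hm 0 1) (hm 1 0))

/-- existence of a nonzero kernel vector for the reduction -/
lemma exists_ker {M : Matrix (Fin 2) (Fin 2) R} (h : inMM R M) :
    ∃ v : Fin 2 → ResidueField R, v ≠ 0 ∧ (rbar M).mulVec v = 0 := by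
  set N := rbar M with hN
  have hdet : N 0 0 * N 1 1 - N 0 1 * N 1 0 = 0 := by
    have := det_rbar_eq_zero h; rwa [Matrix.det_fin_two] at this
  by_cases h0 : N 0 0 ≠ 0 ∨ N 0 1 ≠ 0
  · refine ⟨![N 0 1, -(N 0 0)], ?_, ?_⟩
    · intro hv
      rcases h0 with h0 | h0
      · exact h0 (by have := congrFun hv 1; simpa using (neg_eq_zero.mp (by simpa using this)))
      · exact h0 (by simpa using congrFun hv 0)
    · funext i
      fin_cases i
      · simp [Matrix.mulVec, dotProduct, Fin.sum_univ_two]; ring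
      · simp [Matrix.mulVec, dotProduct, Fin.sum_univ_two]
        linear_combination -hdet
  · push_neg at h0
    refine ⟨![N 1 1, -(N 1 0)], ?_, ?_⟩
    · intro hv
      apply rbar_ne_zero h
      have h11 : N 1 1 = 0 := by simpa using congrFun hv 0
      have h10 : N 1 0 = 0 := neg_eq_zero.mp (by simpa using congrFun hv 1)
      funext i j
      fin_cases i <;> fin_cases j
      · exact h0.1
      · exact h0.2
      · exact h10
      · exact h11
    · funext i
      fin_cases i
      · simp [Matrix.mulVec, dotProduct, Fin.sum_univ_two, h0.1, h0.2]
      · simp [Matrix.mulVec, dotProduct, Fin.sum_univ_two]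
        ring

/-- the kernel is one-dimensional: any two kernel vectors are proportional -/
lemma ker_cross {M : Matrix (Fin 2) (Fin 2) R} (h : inMM R M)
    {v w : Fin 2 → ResidueField R} (hv : (rbar M).mulVec v = 0) (hw : (rbar M).mulVec w = 0) :
    v 0 * w 1 = v 1 * w 0 := by
  by_contra hc
  apply rbar_ne_zero h
  set N := rbar M
  have ev : ∀ i, N i 0 * v 0 + N i 1 * v 1 = 0 := by
    intro i
    have := congrFun hv i
    simpa [Matrix.mulVec, dotProduct, Fin.sum_univ_two] using this
  have ew : ∀ i, N i 0 * w 0 + N i 1 * w 1 = 0 := by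
    intro i
    have := congrFun hw i
    simpa [Matrix.mulVec, dotProduct, Fin.sum_univ_two] using this
  have hcross : v 0 * w 1 - v 1 * w 0 ≠ 0 := fun h2 => hc (sub_eq_zero.mp h2)
  have key : ∀ i, N i 0 = 0 ∧ N i 1 = 0 := by
    intro i
    constructor
    · have h1 : N i 0 * (v 0 * w 1 - v 1 * w 0) = 0 := by
        linear_combination w 1 * ev i - v 1 * ew i
      exact (mul_eq_zero.mp h1).resolve_right hcross
    · have h1 : N i 1 * (v 0 * w 1 - v 1 * w 0) = 0 := by
        linear_combination (- w 0) * ev i + v 0 * ew i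
      exact (mul_eq_zero.mp h1).resolve_right hcross
  funext i j
  fin_cases j
  · exact (key i).1
  · exact (key i).2

variable [Fintype (ResidueField R)] [DecidableEq (ResidueField R)]

section ftilde_val

/-- Value of `ftilde` in terms of a kernel vector of the reduction. -/
lemma ftilde_eq_ker (M : MM R) {v : Fin 2 → ResidueField R} (hv : v ≠ 0)
    (hker : (rbar M.1).mulVec v = 0) :
    ftilde R M = ((quadraticChar (ResidueField R) (-(v 0 * v 1)) : ℤ) : ℂ) := by
  classical
  set a := residue R (M.1 0 0)
  set b := residue R (M.1 0 1)
  set c := residue R (M.1 1 0)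
  set d := residue R (M.1 1 1)
  have e0 : a * v 0 + b * v 1 = 0 := by
    simpa [rbar, Matrix.mulVec, dotProduct, Fin.sum_univ_two, a, b]
      using congrFun hker 0
  have e1 : c * v 0 + d * v 1 = 0 := by
    simpa [rbar, Matrix.mulVec, dotProduct, Fin.sum_univ_two, c, d]
      using congrFun hker 1
  by_cases hv0 : v 0 = 0
  · have hv1 : v 1 ≠ 0 := by
      intro hv1; exact hv (funext fun i => by fin_cases i <;> simp [hv0, hv1])
    have hb : b = 0 := by
      have : b * v 1 = 0 := by rw [← e0, hv0]; ring
      exact (mul_eq_zero.mp this).resolve_right hv1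
    have hd : d = 0 := by
      have : d * v 1 = 0 := by rw [← e1, hv0]; ring
      exact (mul_eq_zero.mp this).resolve_right hv1
    rw [ftilde]
    rw [if_neg, if_neg]
    · simp [hv0, quadraticChar_zero]
    · rintro ⟨-, h2⟩; exact (res_ne_zero_iff _).mpr h2 hd
    · rintro ⟨-, h2⟩; exact (res_ne_zero_iff _).mpr h2 hb
  · by_cases hv1 : v 1 = 0
    · have ha : a = 0 := by
        have : a * v 0 = 0 := by rw [← e0, hv1]; ring
        exact (mul_eq_zero.mp this).resolve_right hv0
      have hc : c = 0 := by
        have : c * v 0 = 0 := by rw [← e1, hv1]; ring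
        exact (mul_eq_zero.mp this).resolve_right hv0
      rw [ftilde]
      rw [if_neg, if_neg]
      · simp [hv1, quadraticChar_zero]
      · rintro ⟨h1, -⟩; exact (res_ne_zero_iff _).mpr h1 hc
      · rintro ⟨h1, -⟩; exact (res_ne_zero_iff _).mpr h1 ha
    · -- both coordinates nonzero
      have key : ∀ x y : ResidueField R, x ≠ 0 → x * v 0 + y * v 1 = 0 →
          (y ≠ 0 ∧ x * y = (-(v 0 * v 1)) * (x * (v 1)⁻¹) ^ 2) := by
        intro x y hx hxy
        have hy : y = -(x * v 0 * (v 1)⁻¹) := by field_simp; linear_combination hxy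
        constructor
        · rw [hy]
          exact neg_ne_zero.mpr (mul_ne_zero (mul_ne_zero hx hv0) (inv_ne_zero hv1))
        · rw [hy]; field_simp
      by_cases ha : a = 0
      · have hb : b = 0 := by
          have : b * v 1 = 0 := by rw [← e0, ha]; ring
          exact (mul_eq_zero.mp this).resolve_right hv1
        have hcd : c ≠ 0 := by
          intro hc
          apply rbar_ne_zero M.2
          have hd : d * v 1 = 0 := by rw [← e1, hc]; ring
          have hd' : d = 0 := (mul_eq_zero.mp hd).resolve_right hv1
          funext i j
          fin_cases i <;> fin_cases j
          · exact ha
          · exact hb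
          · exact hc
          · exact hd'
        obtain ⟨hdne, hval⟩ := key c d hcd e1
        rw [ftilde]
        rw [if_neg, if_pos ⟨(res_ne_zero_iff _).mp hcd, (res_ne_zero_iff _).mp hdne⟩]
        · rw [hval, _root_.map_mul, quadraticChar_sq_one' (mul_ne_zero hcd (inv_ne_zero hv1)), mul_one]
        · rintro ⟨h1, -⟩; exact (res_ne_zero_iff _).mpr h1 ha
      · obtain ⟨hbne, hval⟩ := key a b ha e0
        rw [ftilde]
        rw [if_pos ⟨(res_ne_zero_iff _).mp ha, (res_ne_zero_iff _).mp hbne⟩]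
        rw [hval, _root_.map_mul, quadraticChar_sq_one' (mul_ne_zero ha (inv_ne_zero hv1)), mul_one]

end ftilde_val

section gl

lemma eq_irr_mul_unit {ϖ x : R} (hϖ : Irreducible ϖ) (h1 : x ∈ maximalIdeal R)
    (h2 : x ∉ (maximalIdeal R) ^ 2) : ∃ u : Rˣ, x = ϖ * u := by
  have hmax := (IsDiscreteValuationRing.irreducible_iff_uniformizer ϖ).mp hϖ
  rw [hmax, Ideal.mem_span_singleton] at h1
  obtain ⟨y, hy⟩ := h1
  refine ⟨(?_ : IsUnit y).unit, by rw [hy, IsUnit.unit_spec]⟩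
  by_contra hyu
  apply h2
  rw [hmax, Ideal.span_singleton_pow, Ideal.mem_span_singleton]
  have : ϖ ∣ y := by
    rwa [← Ideal.mem_span_singleton, ← hmax, IsLocalRing.mem_maximalIdeal, mem_nonunits_iff]
  obtain ⟨z, hz⟩ := this
  exact ⟨z, by rw [hy, hz, pow_two, mul_assoc]⟩

lemma mem_max_of_res_zero {x : R} (h : residue R x = 0) : x ∈ maximalIdeal R :=
  (IsLocalRing.residue_eq_zero_iff x).mp h

/-- Lemma L: if the kernel of the reduction of `M` is contained in that of `M'`,
then `M' = g M` for some `g ∈ GL₂(R)`. -/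
lemma exists_gl {M M' : Matrix (Fin 2) (Fin 2) R} (hM : inMM R M) (hM' : inMM R M')
    (hker : ∀ v : Fin 2 → ResidueField R, (rbar M).mulVec v = 0 → (rbar M').mulVec v = 0) :
    ∃ g : (Matrix (Fin 2) (Fin 2) R)ˣ, M' = (g : Matrix (Fin 2) (Fin 2) R) * M := by
  classical
  obtain ⟨ϖ, hϖ⟩ := IsDiscreteValuationRing.exists_irreducible R
  obtain ⟨u, hu⟩ := eq_irr_mul_unit hϖ hM.1 hM.2
  obtain ⟨u', hu'⟩ := eq_irr_mul_unit hϖ hM'.1 hM'.2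
  -- the product M' * adjugate M reduces to 0
  have hadj : rbar M' * (rbar M).adjugate = 0 := by
    have hcol : ∀ j, (rbar M).mulVec (fun k => (rbar M).adjugate k j) = 0 := by
      intro j
      funext i
      have h0 : (rbar M * (rbar M).adjugate) i j = 0 := by
        rw [Matrix.mul_adjugate, det_rbar_eq_zero hM]
        simp
      simpa [Matrix.mul_apply, Matrix.mulVec, dotProduct] using h0
    funext i j
    have := congrFun (hker _ (hcol j)) i
    simpa [Matrix.mul_apply, Matrix.mulVec, dotProduct] using this
  have hdvd : ∀ i j, ∃ c, (M' * M.adjugate) i j = ϖ * c := by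
    intro i j
    have hres : residue R ((M' * M.adjugate) i j) = 0 := by
      have : rbar (M' * M.adjugate) = 0 := by
        rw [rbar_mul]
        have hadj2 : rbar (M.adjugate) = (rbar M).adjugate := by
          simpa [rbar, RingHom.mapMatrix_apply] using (residue R).map_adjugate M
        rw [hadj2, hadj]
      have := congrFun (congrFun this i) j
      simpa [rbar, Matrix.map_apply] using this
    have := mem_max_of_res_zero hres
    rw [(IsDiscreteValuationRing.irreducible_iff_uniformizer ϖ).mp hϖ,
      Ideal.mem_span_singleton] at this
    exact this
  set B : Matrix (Fin 2) (Fin 2) R := fun i j => (hdvd i j).choose with hBdef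
  have hB : M' * M.adjugate = ϖ • B := by
    funext i j
    rw [Matrix.smul_apply, smul_eq_mul]
    exact (hdvd i j).choose_spec
  have hϖ0 : ϖ ≠ 0 := hϖ.ne_zero
  -- determinant of B
  have hdetB : B.det = (u' : R) * u := by
    have h1 : (M' * M.adjugate).det = M'.det * M.det := by
      rw [Matrix.det_mul, Matrix.det_adjugate]
      norm_num
    have h2 : (ϖ • B).det = ϖ ^ 2 * B.det := by
      rw [Matrix.det_smul]
      norm_num
    rw [hB, h2, hu, hu'] at h1
    have : ϖ ^ 2 * B.det = ϖ ^ 2 * ((u' : R) * u) := by rw [h1]; ring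
    exact mul_left_cancel₀ (pow_ne_zero 2 hϖ0) this
  -- B * M = u • M'
  have hBM : B * M = (u : R) • M' := by
    have h1 : ϖ • (B * M) = ϖ • ((u : R) • M') := by
      calc ϖ • (B * M) = (ϖ • B) * M := by rw [Matrix.smul_mul]
        _ = M' * M.adjugate * M := by rw [hB]
        _ = M' * (M.adjugate * M) := by rw [Matrix.mul_assoc]
        _ = M' * (M.det • 1) := by rw [Matrix.adjugate_mul]
        _ = M.det • M' := by rw [Matrix.mul_smul, Matrix.mul_one]
        _ = ϖ • ((u : R) • M') := by rw [hu, mul_smul]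
    funext i j
    have := congrFun (congrFun h1 i) j
    simp only [Matrix.smul_apply, smul_eq_mul] at this ⊢
    exact mul_left_cancel₀ hϖ0 this
  have hdetg : IsUnit (((u⁻¹ : Rˣ) : R) • B).det := by
    rw [Matrix.det_smul, hdetB]
    exact ((u⁻¹.isUnit.pow _).mul (u'.isUnit.mul u.isUnit))
  refine ⟨((Matrix.isUnit_iff_isUnit_det _).mpr hdetg).unit, ?_⟩
  rw [IsUnit.unit_spec, Matrix.smul_mul, hBM, smul_smul, Units.inv_mul, one_smul]

end gl

section more

lemma inMM_irr_mul_unit {ϖ u : R} (hϖ : Irreducible ϖ) (hu : IsUnit u) :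
    ϖ * u ∈ maximalIdeal R ∧ ϖ * u ∉ (maximalIdeal R) ^ 2 := by
  have hmax := (IsDiscreteValuationRing.irreducible_iff_uniformizer ϖ).mp hϖ
  constructor
  · rw [hmax, Ideal.mem_span_singleton]
    exact ⟨u, rfl⟩
  · rw [hmax, Ideal.span_singleton_pow, Ideal.mem_span_singleton]
    rintro ⟨z, hz⟩
    have : ϖ * u = ϖ * (ϖ * z) := by rw [hz]; ring
    have h2 : u = ϖ * z := mul_left_cancel₀ hϖ.ne_zero this
    exact hϖ.not_isUnit (isUnit_of_dvd_unit ⟨z, h2⟩ hu)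

lemma inMM_mul_right {M N : Matrix (Fin 2) (Fin 2) R} (hM : inMM R M) (hN : IsUnit N.det) :
    inMM R (M * N) := by
  obtain ⟨w, hw⟩ := hN
  constructor
  · rw [Matrix.det_mul]
    exact Ideal.mul_mem_right _ _ hM.1
  · intro h
    apply hM.2
    have : M.det = (M * N).det * ((w⁻¹ : Rˣ) : R) := by
      rw [Matrix.det_mul, ← hw, mul_assoc, Units.mul_inv, mul_one]
    rw [this]
    exact Ideal.mul_mem_right _ _ h

lemma chi_inv {x : ResidueField R} (hx : x ≠ 0) :
    quadraticChar (ResidueField R) x⁻¹ = quadraticChar (ResidueField R) x := by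
  have h1 : quadraticChar (ResidueField R) x * quadraticChar (ResidueField R) x⁻¹ = 1 := by
    rw [← _root_.map_mul, mul_inv_cancel₀ hx, MulChar.map_one]
  rcases quadraticChar_dichotomy hx with h | h <;> rw [h] at h1 ⊢ <;> omega

lemma rbar_diagonal (a d : R) :
    rbar (Matrix.diagonal ![a, d]) = Matrix.diagonal ![residue R a, residue R d] := by
  rw [rbar, Matrix.diagonal_map (map_zero _)]
  exact congrArg Matrix.diagonal (by funext i; fin_cases i <;> simp)

lemma goodfun_ftilde : GoodFun R (ftilde R) := by
  constructor
  · intro g M h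
    obtain ⟨v, hv, hker⟩ := exists_ker M.2
    have hker2 : (rbar ((g : Matrix (Fin 2) (Fin 2) R) * M.1)).mulVec v = 0 := by
      rw [rbar_mul, ← Matrix.mulVec_mulVec, hker, Matrix.mulVec_zero]
    rw [ftilde_eq_ker ⟨_, h⟩ hv hker2, ftilde_eq_ker M hv hker]
  · intro a d M h
    obtain ⟨v, hv, hker⟩ := exists_ker M.2
    have hra : residue R (a : R) ≠ 0 := (res_ne_zero_iff _).mpr a.isUnit
    have hrd : residue R (d : R) ≠ 0 := (res_ne_zero_iff _).mpr d.isUnit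
    set ra := residue R (a : R)
    set rd := residue R (d : R)
    set w : Fin 2 → ResidueField R := ![ra⁻¹ * v 0, rd⁻¹ * v 1] with hwdef
    have hw : w ≠ 0 := by
      intro h0
      apply hv
      funext i
      fin_cases i
      · have := congrFun h0 0
        simp only [hwdef] at this
        have : ra⁻¹ * v 0 = 0 := by simpa using this
        rcases mul_eq_zero.mp this with h1 | h1
        · exact absurd h1 (inv_ne_zero hra)
        · simpa using h1
      · have := congrFun h0 1
        simp only [hwdef] at this
        have : rd⁻¹ * v 1 = 0 := by simpa using this
        rcases mul_eq_zero.mp this with h1 | h1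
        · exact absurd h1 (inv_ne_zero hrd)
        · simpa using h1
    have hdiag : (Matrix.diagonal ![ra, rd]).mulVec w = v := by
      funext i
      fin_cases i
      · show (Matrix.diagonal ![ra, rd]).mulVec w 0 = v 0
        rw [Matrix.mulVec_diagonal]
        show ra * (ra⁻¹ * v 0) = v 0
        field_simp
      · show (Matrix.diagonal ![ra, rd]).mulVec w 1 = v 1
        rw [Matrix.mulVec_diagonal]
        show rd * (rd⁻¹ * v 1) = v 1
        field_simp
    have hker2 : (rbar (M.1 * Matrix.diagonal ![(a : R), (d : R)])).mulVec w = 0 := by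
      rw [rbar_mul, rbar_diagonal, ← Matrix.mulVec_mulVec, hdiag, hker]
    rw [ftilde_eq_ker ⟨_, h⟩ hw hker2, ftilde_eq_ker M hv hker]
    have harg : -(w 0 * w 1) = (ra * rd)⁻¹ * (-(v 0 * v 1)) := by
      simp only [hwdef]
      show -(ra⁻¹ * v 0 * (rd⁻¹ * v 1)) = _
      field_simp
    rw [harg, _root_.map_mul, chi_inv (mul_ne_zero hra hrd), _root_.map_mul]
    push_cast
    ring

end more

section unique

lemma det_diag_units (a d : Rˣ) : IsUnit (Matrix.diagonal ![(a : R), (d : R)]).det := by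
  rw [Matrix.det_diagonal]
  rw [Fin.prod_univ_two]
  show IsUnit ((a : R) * d)
  exact a.isUnit.mul d.isUnit

lemma f_adjust {f : MM R → ℂ} (hf : GoodFun R f) (a d : Rˣ) (M : MM R)
    (hW : ∀ w : Fin 2 → ResidueField R, (rbar M.1).mulVec w = 0 →
      (rbar (M.1 * Matrix.diagonal ![(a : R), (d : R)])).mulVec w = 0) :
    ((quadraticChar (ResidueField R) (residue R (a : R)) : ℤ) : ℂ) *
      ((quadraticChar (ResidueField R) (residue R (d : R)) : ℤ) : ℂ) * f M = f M := by
  have hMD : inMM R (M.1 * Matrix.diagonal ![(a : R), (d : R)]) :=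
    inMM_mul_right M.2 (det_diag_units a d)
  obtain ⟨g, hg⟩ := exists_gl M.2 hMD hW
  have h2 := hf.2 a d M hMD
  have e : (⟨M.1 * Matrix.diagonal ![(a : R), (d : R)], hMD⟩ : MM R) =
      ⟨(g : Matrix (Fin 2) (Fin 2) R) * M.1, by rw [← hg]; exact hMD⟩ := Subtype.ext hg
  rw [e, hf.1 g M _] at h2
  exact h2.symm

lemma f_vanish (hF2 : ringChar (ResidueField R) ≠ 2) {f : MM R → ℂ} (hf : GoodFun R f)
    (M : MM R) {v : Fin 2 → ResidueField R} (hv : v ≠ 0) (hker : (rbar M.1).mulVec v = 0)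
    (hzero : v 0 = 0 ∨ v 1 = 0) : f M = 0 := by
  obtain ⟨s, hs⟩ := FiniteField.exists_nonsquare hF2
  have hs0 : s ≠ 0 := fun h => hs (h ▸ ⟨0, by simp⟩)
  have hs1 : quadraticChar (ResidueField R) s = -1 :=
    quadraticChar_neg_one_iff_not_isSquare.mpr hs
  obtain ⟨u, hu⟩ := Ideal.Quotient.mk_surjective s
  have hu' : residue R u = s := hu
  have huu : IsUnit u := (res_ne_zero_iff u).mp (by rw [hu']; exact hs0)
  set uu : Rˣ := huu.unit with huudef
  have huures : residue R (uu : R) = s := by rw [huu.unit_spec, hu']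
  rcases hzero with h0 | h1
  · -- v 0 = 0, use diagonal ![1, u]
    have hv1 : v 1 ≠ 0 := by
      intro h1'
      exact hv (funext fun i => by fin_cases i <;> simp [h0, h1'])
    have key := f_adjust hf 1 uu M ?_
    · rw [Units.val_one, _root_.map_one, MulChar.map_one, huures, hs1] at key
      push_cast at key
      linear_combination (-1/2 : ℂ) * key
    · intro w hw
      have hcross := ker_cross M.2 hker hw
      rw [h0] at hcross
      have hw0 : w 0 = 0 := by
        rcases mul_eq_zero.mp (by rw [← hcross]; ring : v 1 * w 0 = 0) with h | h
        · exact absurd h hv1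
        · exact h
      rw [rbar_mul, rbar_diagonal, ← Matrix.mulVec_mulVec]
      have hdw : (Matrix.diagonal ![residue R ((1:Rˣ) : R), residue R (uu : R)]).mulVec w
          = (s * w 1 * (v 1)⁻¹) • v := by
        funext i
        fin_cases i
        · show (Matrix.diagonal ![residue R ((1:Rˣ) : R), residue R (uu : R)]).mulVec w 0
            = s * w 1 * (v 1)⁻¹ * v 0
          rw [Matrix.mulVec_diagonal]
          show residue R ((1:Rˣ) : R) * w 0 = _
          rw [hw0, h0]; ring
        · show (Matrix.diagonal ![residue R ((1:Rˣ) : R), residue R (uu : R)]).mulVec w 1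
            = s * w 1 * (v 1)⁻¹ * v 1
          rw [Matrix.mulVec_diagonal]
          show residue R (uu : R) * w 1 = _
          rw [huures]; field_simp

      rw [hdw, Matrix.mulVec_smul, hker, smul_zero]
  · -- v 1 = 0, use diagonal ![u, 1]
    have hv0 : v 0 ≠ 0 := by
      intro h0'
      exact hv (funext fun i => by fin_cases i <;> simp [h0', h1])
    have key := f_adjust hf uu 1 M ?_
    · rw [Units.val_one, _root_.map_one, MulChar.map_one, huures, hs1] at key
      push_cast at key
      linear_combination (-1/2 : ℂ) * key
    · intro w hw
      have hcross := ker_cross M.2 hker hw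
      rw [h1] at hcross
      have hw1 : w 1 = 0 := by
        rcases mul_eq_zero.mp (by rw [hcross]; ring : v 0 * w 1 = 0) with h | h
        · exact absurd h hv0
        · exact h
      rw [rbar_mul, rbar_diagonal, ← Matrix.mulVec_mulVec]
      have hdw : (Matrix.diagonal ![residue R (uu : R), residue R ((1:Rˣ) : R)]).mulVec w
          = (s * w 0 * (v 0)⁻¹) • v := by
        funext i
        fin_cases i
        · show (Matrix.diagonal ![residue R (uu : R), residue R ((1:Rˣ) : R)]).mulVec w 0
            = s * w 0 * (v 0)⁻¹ * v 0
          rw [Matrix.mulVec_diagonal]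
          show residue R (uu : R) * w 0 = _
          rw [huures]; field_simp
        · show (Matrix.diagonal ![residue R (uu : R), residue R ((1:Rˣ) : R)]).mulVec w 1
            = s * w 0 * (v 0)⁻¹ * v 1
          rw [Matrix.mulVec_diagonal]
          show residue R ((1:Rˣ) : R) * w 1 = _
          rw [hw1, h1]; ring
      rw [hdw, Matrix.mulVec_smul, hker, smul_zero]

lemma f_generic {f : MM R → ℂ} (hf : GoodFun R f) {ϖ : R} (hϖ : Irreducible ϖ)
    {A₁m : Matrix (Fin 2) (Fin 2) R} (hA₁def : A₁m = ![![1, 1], ![0, ϖ]])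
    (hA₁ : inMM R A₁m) (M : MM R) {v : Fin 2 → ResidueField R}
    (hv0 : v 0 ≠ 0) (hv1 : v 1 ≠ 0) (hker : (rbar M.1).mulVec v = 0) :
    f M = ((quadraticChar (ResidueField R) (-(v 0 * v 1)) : ℤ) : ℂ) *
      f ⟨A₁m, hA₁⟩ := by
  have hresϖ : residue R ϖ = 0 := by
    rw [IsLocalRing.residue_eq_zero_iff,
      (IsDiscreteValuationRing.irreducible_iff_uniformizer ϖ).mp hϖ]
    exact Ideal.mem_span_singleton_self ϖ
  obtain ⟨p, hp⟩ := Ideal.Quotient.mk_surjective (v 0)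
  obtain ⟨q, hq⟩ := Ideal.Quotient.mk_surjective (v 1)
  have hp' : residue R p = v 0 := hp
  have hq' : residue R q = v 1 := hq
  have hpu : IsUnit p := (res_ne_zero_iff p).mp (by rw [hp']; exact hv0)
  have hqu : IsUnit q := (res_ne_zero_iff q).mp (by rw [hq']; exact hv1)
  set pu : Rˣ := hpu.unit with hpudef
  set qu : Rˣ := hqu.unit with hqudef
  have hpres : residue R (pu : R) = v 0 := by rw [hpu.unit_spec, hp']
  have hqres : residue R (qu : R) = v 1 := by rw [hqu.unit_spec, hq']
  set npu : Rˣ := -pu with hnpudef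
  have hnpres : residue R (npu : R) = -(v 0) := by
    rw [hnpudef, Units.val_neg, map_neg, hpres]
  -- the matrix A
  set A : Matrix (Fin 2) (Fin 2) R := ![![(qu : R), (npu : R)], ![0, ϖ]] with hAdef
  have hdetA : A.det = ϖ * (qu : R) := by
    rw [Matrix.det_fin_two, hAdef]
    show (qu : R) * ϖ - (npu : R) * 0 = ϖ * (qu : R)
    ring
  have hA : inMM R A := by
    rw [inMM, hdetA]
    exact inMM_irr_mul_unit hϖ qu.isUnit
  -- step 1 : M = g * A
  have hker₁ : ∀ w : Fin 2 → ResidueField R, (rbar A).mulVec w = 0 → (rbar M.1).mulVec w = 0 := by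
    intro w hw
    have hrow : v 1 * w 0 + (-(v 0)) * w 1 = 0 := by
      have := congrFun hw 0
      simp only [rbar, Matrix.mulVec, dotProduct, Fin.sum_univ_two, Matrix.map_apply] at this
      simpa [rbar, hAdef, Matrix.map_apply, Matrix.mulVec, dotProduct, Fin.sum_univ_two, hqres, hnpres]
        using this
    have hweq : w = (w 0 * (v 0)⁻¹) • v := by
      funext i
      fin_cases i
      · show w 0 = w 0 * (v 0)⁻¹ * v 0
        field_simp
      · show w 1 = w 0 * (v 0)⁻¹ * v 1
        field_simp
        linear_combination -hrow
    rw [hweq, Matrix.mulVec_smul, hker, smul_zero]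
  obtain ⟨g, hg⟩ := exists_gl hA M.2 hker₁
  have hstep1 : f M = f ⟨A, hA⟩ := by
    have e : M = ⟨(g : Matrix (Fin 2) (Fin 2) R) * A, by rw [← hg]; exact M.2⟩ :=
      Subtype.ext hg
    rw [e, hf.1 g ⟨A, hA⟩ _]
  -- step 2 : A = D * (A₁ * diag(qu, npu))
  have hDu : IsUnit (Matrix.diagonal ![(1 : R), ((npu⁻¹ : Rˣ) : R)]) := by
    rw [Matrix.isUnit_iff_isUnit_det, Matrix.det_diagonal, Fin.prod_univ_two]
    show IsUnit ((1 : R) * ((npu⁻¹ : Rˣ) : R))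
    rw [one_mul]
    exact (npu⁻¹).isUnit
  have hMd : inMM R (A₁m * Matrix.diagonal ![(qu : R), (npu : R)]) :=
    inMM_mul_right hA₁ (det_diag_units qu npu)
  have hAeq : A = (Matrix.diagonal ![(1 : R), ((npu⁻¹ : Rˣ) : R)]) *
      (A₁m * Matrix.diagonal ![(qu : R), (npu : R)]) := by
    rw [← Matrix.mul_assoc]
    funext i j
    rw [Matrix.mul_apply]
    rw [Fin.sum_univ_two]
    simp only [Matrix.mul_apply, Fin.sum_univ_two]
    fin_cases i <;> fin_cases j <;>
      simp [hAdef, hA₁def, Matrix.diagonal_mul, Matrix.mul_diagonal, Matrix.mul_apply, Fin.sum_univ_two]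
    show ϖ = ((npu⁻¹ : Rˣ) : R) * ϖ * (npu : R)
    calc ϖ = (((npu⁻¹ : Rˣ) : R) * (npu : R)) * ϖ := by rw [Units.inv_mul, one_mul]
      _ = ((npu⁻¹ : Rˣ) : R) * ϖ * (npu : R) := by ring
  have hstep2 : f ⟨A, hA⟩ = f ⟨_, hMd⟩ := by
    have e2 : (hDu.unit : Matrix (Fin 2) (Fin 2) R) *
        (A₁m * Matrix.diagonal ![(qu : R), (npu : R)]) = A := by
      rw [hDu.unit_spec]; exact hAeq.symm
    have h' : inMM R ((hDu.unit : Matrix (Fin 2) (Fin 2) R) *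
        (A₁m * Matrix.diagonal ![(qu : R), (npu : R)])) := by rw [e2]; exact hA
    have e : (⟨A, hA⟩ : MM R) = ⟨_, h'⟩ := Subtype.ext e2.symm
    rw [e, hf.1 hDu.unit ⟨_, hMd⟩ h']
  have hstep3 := hf.2 qu npu ⟨A₁m, hA₁⟩ hMd
  rw [hstep1, hstep2, hstep3, hqres, hnpres]
  have harg : -(v 0 * v 1) = (v 1) * (-(v 0)) := by ring
  rw [harg, _root_.map_mul]
  push_cast
  ring

end unique


end helpersAux

/-- Let `R` be a discrete valuation ring with finite residue field of odd
cardinality.  The `ℂ`-vector space of functions `f : 𝕄 → ℂ` such that (i) `f(gM) = f(M)` for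
all `g ∈ GL₂(R)`, `M ∈ 𝕄`, and (ii) `f(M·diag(a,d)) = χ(ā)·χ(d̄)·f(M)` for all units `a, d`
of `R` and `M ∈ 𝕄`, is one-dimensional, and the function `f̃` is a basis of this space. -/
theorem stmt_3 (R : Type*) [CommRing R] [IsDomain R] [IsDiscreteValuationRing R]
    [Fintype (ResidueField R)] [DecidableEq (ResidueField R)]
    (hodd : Odd (Fintype.card (ResidueField R))) :
    GoodFun R (ftilde R) ∧ ftilde R ≠ 0 ∧
      ∀ f : MM R → ℂ, GoodFun R f → ∃ c : ℂ, f = c • ftilde R := by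
  obtain ⟨ϖ, hϖ⟩ := IsDiscreteValuationRing.exists_irreducible R
  have hresϖ : residue R ϖ = 0 := by
    rw [IsLocalRing.residue_eq_zero_iff,
      (IsDiscreteValuationRing.irreducible_iff_uniformizer ϖ).mp hϖ]
    exact Ideal.mem_span_singleton_self ϖ
  set A₁m : Matrix (Fin 2) (Fin 2) R := ![![1, 1], ![0, ϖ]] with hA₁def
  have hdet : A₁m.det = ϖ * 1 := by
    rw [Matrix.det_fin_two]
    show (1 : R) * ϖ - 1 * 0 = ϖ * 1
    ring
  have hA₁ : inMM R A₁m := by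
    rw [inMM, hdet]
    exact inMM_irr_mul_unit hϖ isUnit_one
  have hvne : (![1, -1] : Fin 2 → ResidueField R) ≠ 0 := by
    intro h
    have := congrFun h 0
    simp at this
  have hkerA₁ : (rbar A₁m).mulVec ![1, -1] = 0 := by
    funext i
    simp only [rbar, Matrix.mulVec, dotProduct, Fin.sum_univ_two, Matrix.map_apply]
    fin_cases i <;>
      simp [rbar, hA₁def, Matrix.map_apply, Matrix.mulVec, dotProduct, Fin.sum_univ_two, hresϖ]
  have hA₁val : ftilde R ⟨A₁m, hA₁⟩ = 1 := by
    rw [ftilde_eq_ker ⟨A₁m, hA₁⟩ hvne hkerA₁]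
    norm_num [MulChar.map_one]
  refine ⟨goodfun_ftilde, ?_, ?_⟩
  · intro h0
    have := congrFun h0 ⟨A₁m, hA₁⟩
    rw [hA₁val] at this
    simpa using this
  · intro f hf
    have hF2 : ringChar (ResidueField R) ≠ 2 := by
      intro h2
      have := FiniteField.even_card_of_char_two h2
      rw [Nat.odd_iff] at hodd
      omega
    refine ⟨f ⟨A₁m, hA₁⟩, ?_⟩
    funext M
    rw [Pi.smul_apply, smul_eq_mul]
    obtain ⟨v, hv, hker⟩ := exists_ker M.2
    rw [ftilde_eq_ker M hv hker]
    by_cases hv0 : v 0 = 0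
    · rw [f_vanish hF2 hf M hv hker (Or.inl hv0), hv0]
      norm_num [quadraticChar_zero]
    · by_cases hv1 : v 1 = 0
      · rw [f_vanish hF2 hf M hv hker (Or.inr hv1), hv1]
        norm_num [quadraticChar_zero]
      · rw [f_generic hf hϖ hA₁def hA₁ M hv0 hv1 hker]
        ring
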